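/- Let r be a nonzero integer, let Δ be a positive integer, and let q be an integer. In the abelianization of the group G with presentation ⟨x, y, t ∣ t⁻¹xt = x, t⁻¹yt = yxʳ, t^Δ(xyx⁻¹y⁻¹)^q = 1⟩, the image of the generator t has order exactly Δ. -/

import Mathlib

/-- The three generators `x`, `y`, `t`. -/
inductive Gen : Type
  | x | y | t

/-- Relators of `⟨x, y, t ∣ t⁻¹xt = x, t⁻¹yt = yxʳ, t^Δ(xyx⁻¹y⁻¹)^q = 1⟩`. -/
def fillingRels₁ (r : ℤ) (Δ : ℕ) (q : ℤ) : Set (FreeGroup Gen) :=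
  { (FreeGroup.of Gen.t)⁻¹ * FreeGroup.of Gen.x * FreeGroup.of Gen.t *
      (FreeGroup.of Gen.x)⁻¹,
    (FreeGroup.of Gen.t)⁻¹ * FreeGroup.of Gen.y * FreeGroup.of Gen.t *
      (FreeGroup.of Gen.x) ^ (-r) * (FreeGroup.of Gen.y)⁻¹,
    (FreeGroup.of Gen.t) ^ Δ *
      (FreeGroup.of Gen.x * FreeGroup.of Gen.y * (FreeGroup.of Gen.x)⁻¹ *
        (FreeGroup.of Gen.y)⁻¹) ^ q }

/-- The group `⟨x, y, t ∣ t⁻¹xt = x, t⁻¹yt = yxʳ, t^Δ(xyx⁻¹y⁻¹)^q = 1⟩`. -/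
abbrev QGamma₁ (r : ℤ) (Δ : ℕ) (q : ℤ) : Type := PresentedGroup (fillingRels₁ r Δ q)

/-- The map sending `t` to `1` and `x, y` to `0` in `ZMod Δ`. -/
def genMap (Δ : ℕ) : Gen → Multiplicative (ZMod Δ)
  | Gen.t => Multiplicative.ofAdd 1
  | _ => 1

lemma genMap_rels (r : ℤ) (Δ : ℕ) (q : ℤ) :
    ∀ w ∈ fillingRels₁ r Δ q, FreeGroup.lift (genMap Δ) w = 1 := by
  intro w hw
  rcases hw with h | h | h <;> subst h <;>
    simp [genMap, ← ofAdd_nsmul, ZMod.natCast_self]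

/-- If `r ≠ 0` and `Δ > 0`, then in the abelianization of
`⟨x, y, t ∣ t⁻¹xt = x, t⁻¹yt = yxʳ, t^Δ(xyx⁻¹y⁻¹)^q = 1⟩` the image of the
generator `t` has order exactly `Δ`. -/
theorem orderOf_t_in_abelianization
    (r : ℤ) (hr : r ≠ 0) (Δ : ℕ) (hΔ : 0 < Δ) (q : ℤ) :
    orderOf (Abelianization.of (PresentedGroup.of Gen.t : QGamma₁ r Δ q)) = Δ := by
  set T : Abelianization (QGamma₁ r Δ q) :=
    Abelianization.of (PresentedGroup.of Gen.t) with hT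
  have hdvd : orderOf T ∣ Δ := by
    apply orderOf_dvd_of_pow_eq_one
    have hrel : (PresentedGroup.mk (fillingRels₁ r Δ q))
        ((FreeGroup.of Gen.t) ^ Δ *
          (FreeGroup.of Gen.x * FreeGroup.of Gen.y * (FreeGroup.of Gen.x)⁻¹ *
            (FreeGroup.of Gen.y)⁻¹) ^ q) = 1 := by
      have : ((FreeGroup.of Gen.t) ^ Δ *
          (FreeGroup.of Gen.x * FreeGroup.of Gen.y * (FreeGroup.of Gen.x)⁻¹ *
            (FreeGroup.of Gen.y)⁻¹) ^ q) ∈ Subgroup.normalClosure (fillingRels₁ r Δ q) :=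
        Subgroup.subset_normalClosure (by right; right; rfl)
      exact (QuotientGroup.eq_one_iff _).2 this
    have hrel' : (PresentedGroup.of Gen.t : QGamma₁ r Δ q) ^ Δ *
        (PresentedGroup.of Gen.x * PresentedGroup.of Gen.y *
          (PresentedGroup.of Gen.x)⁻¹ * (PresentedGroup.of Gen.y)⁻¹) ^ q = 1 := by
      simpa [map_mul, map_zpow, map_pow, map_inv, PresentedGroup.of] using hrel
    have := congrArg Abelianization.of hrel'
    rw [hT]
    simp only [map_mul, map_zpow, map_pow, map_inv, map_one] at this ⊢
    rw [mul_comm (Abelianization.of (PresentedGroup.of Gen.x))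
      (Abelianization.of (PresentedGroup.of Gen.y))] at this
    group at this
    simpa using this
  have hΔdvd : Δ ∣ orderOf T := by
    set φ : QGamma₁ r Δ q →* Multiplicative (ZMod Δ) :=
      PresentedGroup.toGroup (genMap_rels r Δ q)
    set ψ : Abelianization (QGamma₁ r Δ q) →* Multiplicative (ZMod Δ) :=
      Abelianization.lift φ
    have hψT : ψ T = Multiplicative.ofAdd (1 : ZMod Δ) := by
      rw [hT]
      simp [ψ, φ, genMap]
    have : orderOf (ψ T) ∣ orderOf T := orderOf_map_dvd ψ T
    rwa [hψT, orderOf_ofAdd_eq_addOrderOf, ZMod.addOrderOf_one] at this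
  exact Nat.dvd_antisymm hdvd hΔdvd
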